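/- Let P be an irreducible Markov chain on a finite state space S with stationary distribution d^π, let r(s,a) be a reward function, and suppose everything depends smoothly on a parameter θ. If the differential action-value Q(s) := Q_diff^π(s, π(s)) satisfies the Poisson equation Q(s) = r(s, π(s)) − ρ(θ) + ∑_{s'} P^π(s'|s) Q(s') and all quantities are differentiable in θ, then ∇_θ ρ(θ) = ∑_s d^π(s) [∇_θ r(s,π(s)) + ∑_{s'} ∇_θ P^π(s'|s) · Q(s')], i.e., the stationary-distribution-weighted derivative of the Poisson equation yields the policy gradient with no ∇_θ d^π term. -/

import Mathlib

theorem deterministic_policy_gradient_finite {S : Type*} [Fintype S]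
    (P : ℝ → S → S → ℝ) (r : ℝ → S → ℝ) (ρ : ℝ → ℝ) (Q : ℝ → S → ℝ)
    (d : S → ℝ) (θ₀ : ℝ)
    (ρ' : ℝ) (Q' r' : S → ℝ) (P' : S → S → ℝ)
    (hd_nonneg : ∀ s, 0 ≤ d s)
    (hd_sum : ∑ s, d s = 1)
    (hd_stat : ∀ s', ∑ s, d s * P θ₀ s s' = d s')
    (hPoisson : ∀ θ s, Q θ s = r θ s - ρ θ + ∑ s', P θ s s' * Q θ s')
    (hρ : HasDerivAt ρ ρ' θ₀)
    (hQ : ∀ s, HasDerivAt (fun θ => Q θ s) (Q' s) θ₀)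
    (hr : ∀ s, HasDerivAt (fun θ => r θ s) (r' s) θ₀)
    (hP : ∀ s s', HasDerivAt (fun θ => P θ s s') (P' s s') θ₀) :
    ρ' = ∑ s, d s * (r' s + ∑ s', P' s s' * Q θ₀ s') := by
  -- Differentiate the Poisson equation at θ₀
  have key : ∀ s, Q' s = r' s - ρ' +
      ∑ s', (P' s s' * Q θ₀ s' + P θ₀ s s' * Q' s') := by
    intro s
    have h1 : HasDerivAt (fun θ => r θ s - ρ θ + ∑ s', P θ s s' * Q θ s')
        (r' s - ρ' + ∑ s', (P' s s' * Q θ₀ s' + P θ₀ s s' * Q' s')) θ₀ :=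
      ((hr s).sub hρ).add (HasDerivAt.fun_sum (fun s' _ => (hP s s').mul (hQ s')))
    have hfe : (fun θ => r θ s - ρ θ + ∑ s', P θ s s' * Q θ s')
        = fun θ => Q θ s := funext fun θ => (hPoisson θ s).symm
    rw [hfe] at h1
    exact (hQ s).unique h1
  -- weight by d and sum
  have e1 : ∀ s, d s * Q' s = d s * (r' s + ∑ s', P' s s' * Q θ₀ s')
      - d s * ρ' + d s * ∑ s', P θ₀ s s' * Q' s' := by
    intro s
    rw [key s, Finset.sum_add_distrib]
    ring
  have e2 : ∑ s, d s * Q' s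
      = (∑ s, d s * (r' s + ∑ s', P' s s' * Q θ₀ s'))
        - ρ' + ∑ s, d s * Q' s := by
    calc ∑ s, d s * Q' s
        = ∑ s, (d s * (r' s + ∑ s', P' s s' * Q θ₀ s')
            - d s * ρ' + d s * ∑ s', P θ₀ s s' * Q' s') := by
          exact Finset.sum_congr rfl fun s _ => e1 s
      _ = (∑ s, d s * (r' s + ∑ s', P' s s' * Q θ₀ s'))
            - (∑ s, d s * ρ') + ∑ s, d s * ∑ s', P θ₀ s s' * Q' s' := by
          rw [Finset.sum_add_distrib, Finset.sum_sub_distrib]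
      _ = (∑ s, d s * (r' s + ∑ s', P' s s' * Q θ₀ s'))
            - ρ' + ∑ s, d s * Q' s := by
          congr 1
          · congr 1
            rw [← Finset.sum_mul, hd_sum, one_mul]
          · calc ∑ s, d s * ∑ s', P θ₀ s s' * Q' s'
                = ∑ s, ∑ s', (d s * P θ₀ s s') * Q' s' := by
                  refine Finset.sum_congr rfl fun s _ => ?_
                  rw [Finset.mul_sum]
                  exact Finset.sum_congr rfl fun s' _ => by ring
              _ = ∑ s', ∑ s, (d s * P θ₀ s s') * Q' s' := Finset.sum_comm
              _ = ∑ s', d s' * Q' s' := by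
                  refine Finset.sum_congr rfl fun s' _ => ?_
                  rw [← Finset.sum_mul, hd_stat]
  linarith
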